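/- Let m ≥ 2 be an integer. There exist positive real numbers x and C satisfying the system of three equations −(m−1)/2 − (1/6)·x·(m² − 1) = (−2m³ − m² + 3m)·C, 1/2 − (1/3)·x·(m + 1) = (−m³ + 2m)·C, and (1/2)·x = (m² + m)·C, if and only if 2 ≤ m ≤ 5; and in that case necessarily x = 3(m+1)/(−m² + 4m + 8) and C = x/(2m(m+1)). -/

import Mathlib

theorem stmt_15 (m : ℕ) (hm : 2 ≤ m) :
    ((∃ x C : ℝ, 0 < x ∧ 0 < C ∧
        -((m : ℝ) - 1) / 2 - (1 / 6) * x * ((m : ℝ) ^ 2 - 1)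
          = (-2 * (m : ℝ) ^ 3 - (m : ℝ) ^ 2 + 3 * m) * C ∧
        1 / 2 - (1 / 3) * x * ((m : ℝ) + 1) = (-(m : ℝ) ^ 3 + 2 * m) * C ∧
        (1 / 2) * x = ((m : ℝ) ^ 2 + m) * C) ↔ m ≤ 5) ∧
    (∀ x C : ℝ, 0 < x → 0 < C →
      (-((m : ℝ) - 1) / 2 - (1 / 6) * x * ((m : ℝ) ^ 2 - 1)
          = (-2 * (m : ℝ) ^ 3 - (m : ℝ) ^ 2 + 3 * m) * C ∧
        1 / 2 - (1 / 3) * x * ((m : ℝ) + 1) = (-(m : ℝ) ^ 3 + 2 * m) * C ∧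
        (1 / 2) * x = ((m : ℝ) ^ 2 + m) * C) →
      x = 3 * ((m : ℝ) + 1) / (-(m : ℝ) ^ 2 + 4 * m + 8) ∧
      C = x / (2 * m * ((m : ℝ) + 1))) := by
  have hM : (2 : ℝ) ≤ (m : ℝ) := by exact_mod_cast hm
  have hM0 : (0 : ℝ) < (m : ℝ) := by linarith
  have hM1 : (0 : ℝ) < (m : ℝ) + 1 := by linarith
  constructor
  · constructor
    · rintro ⟨x, C, hx, hC, h1, h2, h3⟩
      by_contra h
      push_neg at h
      have h6 : (6 : ℝ) ≤ (m : ℝ) := by exact_mod_cast h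
      have hkey : x * (-(m : ℝ) ^ 2 + 4 * m + 8) = 3 * ((m : ℝ) + 1) := by
        linear_combination (-6 * ((m : ℝ) + 1)) * h2 + (6 * (2 - (m : ℝ) ^ 2)) * h3
      have hDneg : -(m : ℝ) ^ 2 + 4 * m + 8 ≤ -4 := by nlinarith
      nlinarith
    · intro h
      have h5 : (m : ℝ) ≤ 5 := by exact_mod_cast h
      have hD : (0 : ℝ) < -(m : ℝ) ^ 2 + 4 * m + 8 := by nlinarith
      refine ⟨3 * ((m : ℝ) + 1) / (-(m : ℝ) ^ 2 + 4 * m + 8),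
        3 * ((m : ℝ) + 1) / (-(m : ℝ) ^ 2 + 4 * m + 8) / (2 * m * ((m : ℝ) + 1)),
        by positivity, by positivity, ?_, ?_, ?_⟩ <;>
      · have hD' : (m : ℝ) * (-(m : ℝ) + 4) + 8 ≠ 0 := by nlinarith
        field_simp
        all_goals ring
  · intro x C hx hC ⟨h1, h2, h3⟩
    have hkey : x * (-(m : ℝ) ^ 2 + 4 * m + 8) = 3 * ((m : ℝ) + 1) := by
      linear_combination (-6 * ((m : ℝ) + 1)) * h2 + (6 * (2 - (m : ℝ) ^ 2)) * h3
    have hD : (0 : ℝ) < -(m : ℝ) ^ 2 + 4 * m + 8 := by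
      rcases lt_trichotomy (-(m : ℝ) ^ 2 + 4 * m + 8) 0 with h | h | h
      · nlinarith
      · nlinarith
      · exact h
    constructor
    · rw [eq_div_iff hD.ne']
      linarith [hkey]
    · have : (m : ℝ) ^ 2 + m ≠ 0 := by nlinarith
      field_simp
      linear_combination (-2 : ℝ) * h3
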